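/- The number of matchings (sets of pairwise non-adjacent edges) of the cycle graph C_k on k ≥ 3 vertices equals the Lucas number L_k, where L_1 = 1, L_2 = 3, and L_k = L_{k-1} + L_{k-2}. -/

import Mathlib

/-- Lucas numbers: `L 1 = 1`, `L 2 = 3`, `L k = L (k-1) + L (k-2)` (so `L 0 = 2`). -/
def lucas : ℕ → ℕ
  | 0 => 2
  | 1 => 1
  | k + 2 => lucas (k + 1) + lucas k

/-- The cycle graph on `Fin k`: `x` and `y` are adjacent when they are distinct and
consecutive modulo `k`. For `k ≥ 3` this is the cycle with edges `{i, i+1}` together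
with `{1, k}` (in `1`-indexed notation). -/
def cycleGraph (k : ℕ) : SimpleGraph (Fin k) where
  Adj x y := x ≠ y ∧ ((x.val + 1) % k = y.val ∨ (y.val + 1) % k = x.val)
  symm := by
    constructor
    rintro x y ⟨hne, h⟩
    exact ⟨hne.symm, h.symm⟩
  loopless := ⟨fun x h => h.1 rfl⟩

open Finset


def gcount (n : ℕ) : ℕ := ((range n).powerset.filter fun S => ∀ i ∈ S, i + 1 ∉ S).card

lemma gcount_zero : gcount 0 = 1 := by decide
lemma gcount_one : gcount 1 = 2 := by decide

lemma gcount_succ (n : ℕ) : gcount (n + 2) = gcount (n + 1) + gcount n := by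
  classical
  unfold gcount
  rw [← Finset.card_filter_add_card_filter_not
    (s := (range (n+2)).powerset.filter fun S => ∀ i ∈ S, i + 1 ∉ S) (fun S => n + 1 ∉ S)]
  congr 1
  · congr 1
    ext S
    simp only [mem_filter, mem_powerset]
    constructor
    · rintro ⟨⟨hsub, hsp⟩, hnot⟩
      refine ⟨fun a ha => ?_, hsp⟩
      have h1 := hsub ha
      simp only [mem_range] at h1 ⊢
      rcases (by omega : a < n + 1 ∨ a = n + 1) with h | h
      · exact h
      · exact absurd (h ▸ ha) hnot
    · rintro ⟨hsub, hsp⟩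
      have hs2 : S ⊆ range (n+2) := hsub.trans (by intro a; simp only [mem_range]; omega)
      refine ⟨⟨hs2, hsp⟩, fun h => ?_⟩
      have := hsub h; simp at this
  · refine Finset.card_bij' (fun S _ => S.erase (n+1)) (fun S _ => insert (n+1) S)
      ?_ ?_ ?_ ?_
    · rintro S hS
      simp only [mem_filter, mem_powerset, not_not] at hS
      obtain ⟨⟨hsub, hsp⟩, hmem⟩ := hS
      simp only [mem_filter, mem_powerset]
      refine ⟨fun a ha => ?_, fun i hi => fun hi1 => ?_⟩
      · obtain ⟨hne, haS⟩ := Finset.mem_erase.mp ha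
        have h1 := hsub haS; simp only [mem_range] at h1 ⊢
        have hne2 : a ≠ n := by
          rintro rfl
          exact hsp a haS hmem
        omega
      · obtain ⟨_, hiS⟩ := Finset.mem_erase.mp hi
        exact hsp i hiS (Finset.mem_of_mem_erase hi1)
    · rintro S hS
      simp only [mem_filter, mem_powerset, not_not] at hS ⊢
      obtain ⟨hsub, hsp⟩ := hS
      have hn : n + 1 ∉ S := fun h => by have := hsub h; simp at this
      refine ⟨⟨fun a ha => ?_, fun i hi hi1 => ?_⟩, Finset.mem_insert_self _ _⟩
      · rcases Finset.mem_insert.mp ha with rfl | ha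
        · simp
        · have := hsub ha; simp only [mem_range] at this ⊢; omega
      · rcases Finset.mem_insert.mp hi with rfl | hi
        · rcases Finset.mem_insert.mp hi1 with h | h
          · omega
          · have := hsub h; simp only [mem_range] at this; omega
        · rcases Finset.mem_insert.mp hi1 with h | h
          · have := hsub hi; simp only [mem_range] at this; omega
          · exact hsp i hi h
    · rintro S hS
      simp only [mem_filter, mem_powerset, not_not] at hS
      exact Finset.insert_erase hS.2
    · rintro S hS
      simp only [mem_filter, mem_powerset] at hS
      have : n + 1 ∉ S := fun h => by have := hS.1 h; simp at this
      exact Finset.erase_insert this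

lemma gcount_eq_fib (n : ℕ) : gcount n = Nat.fib (n + 2) := by
  induction n using Nat.strong_induction_on with
  | _ n ih =>
    match n with
    | 0 => simpa using gcount_zero
    | 1 => rw [gcount_one]; rfl
    | (m+2) =>
      rw [gcount_succ, ih (m+1) (by omega), ih m (by omega)]
      have := Nat.fib_add_two (n := m+2)
      have h2 : Nat.fib (m+2+1) = Nat.fib (m+1+2) := rfl
      omega

lemma gcount_Ico (a b : ℕ) :
    ((Ico a b).powerset.filter fun S => ∀ i ∈ S, i + 1 ∉ S).card = gcount (b - a) := by
  classical
  unfold gcount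
  refine Finset.card_bij' (fun S _ => S.image (· - a)) (fun S _ => S.image (· + a)) ?_ ?_ ?_ ?_
  · rintro S hS
    simp only [mem_filter, mem_powerset] at hS ⊢
    obtain ⟨hsub, hsp⟩ := hS
    constructor
    · intro x hx
      simp only [Finset.mem_image] at hx
      obtain ⟨s, hs, rfl⟩ := hx
      have := hsub hs; simp only [Finset.mem_Ico] at this
      simp only [mem_range]; omega
    · intro x hx hx1
      simp only [Finset.mem_image] at hx hx1
      obtain ⟨s, hs, rfl⟩ := hx
      obtain ⟨t, ht, het⟩ := hx1
      have h1 := hsub hs; have h2 := hsub ht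
      simp only [Finset.mem_Ico] at h1 h2
      have : t = s + 1 := by omega
      exact hsp s hs (this ▸ ht)
  · rintro S hS
    simp only [mem_filter, mem_powerset] at hS ⊢
    obtain ⟨hsub, hsp⟩ := hS
    constructor
    · intro x hx
      simp only [Finset.mem_image] at hx
      obtain ⟨s, hs, rfl⟩ := hx
      have := hsub hs; simp only [mem_range] at this
      simp only [Finset.mem_Ico]; omega
    · intro x hx hx1
      simp only [Finset.mem_image] at hx hx1
      obtain ⟨s, hs, rfl⟩ := hx
      obtain ⟨t, ht, het⟩ := hx1
      have : t = s + 1 := by omega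
      exact hsp s hs (this ▸ ht)
  · rintro S hS
    simp only [mem_filter, mem_powerset] at hS
    ext x
    simp only [Finset.mem_image]
    constructor
    · rintro ⟨y, ⟨s, hs, rfl⟩, rfl⟩
      have := hS.1 hs; simp only [Finset.mem_Ico] at this
      rwa [Nat.sub_add_cancel this.1]
    · intro hx
      have := hS.1 hx; simp only [Finset.mem_Ico] at this
      exact ⟨x - a, ⟨x, hx, rfl⟩, by omega⟩
  · rintro S hS
    ext x
    simp only [Finset.mem_image]
    constructor
    · rintro ⟨y, ⟨s, hs, rfl⟩, rfl⟩
      simpa using hs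
    · intro hx
      exact ⟨x + a, ⟨x, hx, rfl⟩, by omega⟩

def ccount (k : ℕ) : ℕ :=
  ((range k).powerset.filter fun S => ∀ i ∈ S, (i + 1) % k ∉ S).card

lemma ccount_eq (k : ℕ) (hk : 3 ≤ k) : ccount k = gcount (k - 1) + gcount (k - 3) := by
  unfold ccount
  rw [← Finset.card_filter_add_card_filter_not
    (s := (range k).powerset.filter fun S => ∀ i ∈ S, (i + 1) % k ∉ S) (fun S => 0 ∉ S)]
  congr 1
  · -- 0 ∉ S : equals sparse subsets of Ico 1 k
    rw [← gcount_Ico 1 k]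
    congr 1
    ext S
    simp only [mem_filter, mem_powerset]
    constructor
    · rintro ⟨⟨hsub, hsp⟩, h0⟩
      refine ⟨fun x hx => ?_, fun i hi hi1 => ?_⟩
      · have := hsub hx; simp only [mem_range] at this
        simp only [Finset.mem_Ico]
        rcases Nat.eq_zero_or_pos x with rfl | hpos
        · exact absurd hx h0
        · omega
      · have hilt := hsub hi; simp only [mem_range] at hilt
        rcases Nat.lt_or_ge (i + 1) k with h | h
        · have := hsp i hi; rw [Nat.mod_eq_of_lt h] at this; exact this hi1
        · have := hsub hi1; simp only [mem_range] at this; omega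
    · rintro ⟨hsub, hsp⟩
      have h0 : 0 ∉ S := fun h => by have := hsub h; simp [Finset.mem_Ico] at this
      refine ⟨⟨fun x hx => ?_, fun i hi hi1 => ?_⟩, h0⟩
      · have := hsub hx; simp only [Finset.mem_Ico] at this; simp only [mem_range]; omega
      · have hilt := hsub hi; simp only [Finset.mem_Ico] at hilt
        rcases Nat.lt_or_ge (i + 1) k with h | h
        · rw [Nat.mod_eq_of_lt h] at hi1
          exact hsp i hi hi1
        · have hik : i + 1 = k := by omega
          rw [hik, Nat.mod_self] at hi1
          exact h0 hi1
  · -- 0 ∈ S : erase/insert bijection with sparse subsets of Ico 2 (k-1)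
    have : gcount (k - 3) = ((Ico 2 (k-1)).powerset.filter fun S => ∀ i ∈ S, i + 1 ∉ S).card := by
      rw [gcount_Ico, (by omega : k - 1 - 2 = k - 3)]
    rw [this]
    refine Finset.card_bij' (fun S _ => S.erase 0) (fun S _ => insert 0 S) ?_ ?_ ?_ ?_
    · rintro S hS
      simp only [mem_filter, mem_powerset, not_not] at hS
      obtain ⟨⟨hsub, hsp⟩, h0⟩ := hS
      have h1 : 1 ∉ S := by
        have := hsp 0 h0
        rwa [Nat.mod_eq_of_lt (by omega)] at this
      have hk1 : k - 1 ∉ S := by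
        intro h
        have := hsp (k-1) h
        rw [(by omega : k - 1 + 1 = k), Nat.mod_self] at this
        exact this h0
      simp only [mem_filter, mem_powerset]
      refine ⟨fun x hx => ?_, fun i hi hi1 => ?_⟩
      · obtain ⟨hne, hxS⟩ := Finset.mem_erase.mp hx
        have := hsub hxS; simp only [mem_range] at this
        simp only [Finset.mem_Ico]
        have : x ≠ 1 := fun h => h1 (h ▸ hxS)
        have hxk : x ≠ k - 1 := fun h => hk1 (h ▸ hxS)
        have := hsub hxS; simp only [mem_range] at this
        omega
      · obtain ⟨hne, hiS⟩ := Finset.mem_erase.mp hi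
        have hilt := hsub hiS; simp only [mem_range] at hilt
        have hik : i ≠ k - 1 := fun h => hk1 (h ▸ hiS)
        have := hsp i hiS
        rw [Nat.mod_eq_of_lt (by omega)] at this
        exact this (Finset.mem_of_mem_erase hi1)
    · rintro S hS
      simp only [mem_filter, mem_powerset] at hS
      obtain ⟨hsub, hsp⟩ := hS
      have hIco : ∀ x ∈ S, 2 ≤ x ∧ x < k - 1 := fun x hx => by
        have := hsub hx; simp only [Finset.mem_Ico] at this; omega
      simp only [mem_filter, mem_powerset, not_not]
      refine ⟨⟨fun x hx => ?_, fun i hi hi1 => ?_⟩, Finset.mem_insert_self _ _⟩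
      · rcases Finset.mem_insert.mp hx with rfl | hx
        · simp only [mem_range]; omega
        · have := hIco x hx; simp only [mem_range]; omega
      · rcases Finset.mem_insert.mp hi with rfl | hi
        · rw [Nat.mod_eq_of_lt (by omega)] at hi1
          rcases Finset.mem_insert.mp hi1 with h | h
          · omega
          · have := hIco 1 h; omega
        · have hii := hIco i hi
          rw [Nat.mod_eq_of_lt (by omega)] at hi1
          rcases Finset.mem_insert.mp hi1 with h | h
          · omega
          · exact hsp i hi h
    · rintro S hS
      simp only [mem_filter, mem_powerset, not_not] at hS
      exact Finset.insert_erase hS.2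
    · rintro S hS
      simp only [mem_filter, mem_powerset] at hS
      have : 0 ∉ S := fun h => by have := hS.1 h; simp [Finset.mem_Ico] at this
      exact Finset.erase_insert this


def eps {k : ℕ} [NeZero k] (i : Fin k) : Sym2 (Fin k) := s(i, i + 1)

lemma val_add_one {k : ℕ} [NeZero k] (hk : 3 ≤ k) (i : Fin k) : (i + 1).val = (i.val + 1) % k := by
  rw [Fin.val_add, Fin.val_one']
  rw [Nat.mod_eq_of_lt (show 1 < k by omega)]

lemma add_one_ne {k : ℕ} [NeZero k] (hk : 3 ≤ k) (i : Fin k) : i + 1 ≠ i := by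
  intro h
  have hv := congrArg Fin.val h
  rw [val_add_one hk] at hv
  have := i.isLt
  rcases Nat.lt_or_ge (i.val + 1) k with h' | h'
  · rw [Nat.mod_eq_of_lt h'] at hv; omega
  · have hik : i.val + 1 = k := by omega
    rw [hik, Nat.mod_self] at hv; omega

lemma eps_injective {k : ℕ} [NeZero k] (hk : 3 ≤ k) : Function.Injective (eps (k := k)) := by
  intro i j h
  rw [eps, eps, Sym2.eq_iff] at h
  rcases h with ⟨h1, _⟩ | ⟨h1, h2⟩
  · exact h1
  · exfalso
    have hv1 := congrArg Fin.val h1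
    have hv2 := congrArg Fin.val h2
    rw [val_add_one hk] at hv1 hv2
    have hi := i.isLt; have hj := j.isLt
    rcases Nat.lt_or_ge (j.val + 1) k with h' | h'
    · rw [Nat.mod_eq_of_lt h'] at hv1
      rcases Nat.lt_or_ge (i.val + 1) k with h'' | h''
      · rw [Nat.mod_eq_of_lt h''] at hv2; omega
      · have : i.val + 1 = k := by omega
        rw [this, Nat.mod_self] at hv2; omega
    · have : j.val + 1 = k := by omega
      rw [this, Nat.mod_self] at hv1
      rcases Nat.lt_or_ge (i.val + 1) k with h'' | h''
      · rw [Nat.mod_eq_of_lt h''] at hv2; omega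
      · have h3 : i.val + 1 = k := by omega
        rw [h3, Nat.mod_self] at hv2; omega

lemma eps_mem_edgeSet {k : ℕ} [NeZero k] (hk : 3 ≤ k) (i : Fin k) :
    eps i ∈ (cycleGraph k).edgeSet := by
  rw [eps, SimpleGraph.mem_edgeSet]
  exact ⟨(add_one_ne hk i).symm, Or.inl (val_add_one hk i).symm⟩

lemma edgeSet_sub {k : ℕ} [NeZero k] (hk : 3 ≤ k) (e : Sym2 (Fin k))
    (he : e ∈ (cycleGraph k).edgeSet) : ∃ i : Fin k, eps i = e := by
  induction e using Sym2.ind with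
  | _ x y =>
    rw [SimpleGraph.mem_edgeSet] at he
    obtain ⟨hne, h | h⟩ := he
    · refine ⟨x, ?_⟩
      rw [eps]
      exact congrArg (fun z => s(x, z)) (Fin.ext ((val_add_one hk x).trans h))
    · refine ⟨y, ?_⟩
      rw [eps, Sym2.eq_swap]
      exact congrArg (fun z => s(z, y)) (Fin.ext ((val_add_one hk y).trans h))

lemma image_eps_edge {k : ℕ} [NeZero k] (hk : 3 ≤ k) (T : Finset (Fin k)) :
    ∀ e ∈ T.image eps, e ∈ (cycleGraph k).edgeSet := by
  intro e he
  obtain ⟨i, _, rfl⟩ := Finset.mem_image.mp he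
  exact eps_mem_edgeSet hk i

lemma image_eps_matching {k : ℕ} [NeZero k] (hk : 3 ≤ k) (T : Finset (Fin k))
    (hT : ∀ i ∈ T, i + 1 ∉ T) :
    ∀ e ∈ T.image eps, ∀ f ∈ T.image eps, e ≠ f → ∀ v : Fin k, v ∈ e → v ∉ f := by
  intro e he f hf hef v hv hvf
  obtain ⟨i, hi, rfl⟩ := Finset.mem_image.mp he
  obtain ⟨j, hj, rfl⟩ := Finset.mem_image.mp hf
  have hij : i ≠ j := fun h => hef (h ▸ rfl)
  rw [eps, Sym2.mem_iff] at hv hvf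
  rcases hv with rfl | rfl
  · rcases hvf with h | h
    · exact hij h
    · exact hT j hj (h ▸ hi)
  · rcases hvf with h | h
    · exact hT i hi (h ▸ hj)
    · exact hij (add_right_cancel h)

lemma card_matchings {k : ℕ} [NeZero k] (hk : 3 ≤ k) :
    Nat.card {s : Finset (Sym2 (Fin k)) //
      (∀ e ∈ s, e ∈ (cycleGraph k).edgeSet) ∧
      (∀ e ∈ s, ∀ f ∈ s, e ≠ f → ∀ v : Fin k, v ∈ e → v ∉ f)} =
    Nat.card {T : Finset (Fin k) // ∀ i ∈ T, i + 1 ∉ T} := by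
  refine (Nat.card_congr (Equiv.ofBijective
    (fun T : {T : Finset (Fin k) // ∀ i ∈ T, i + 1 ∉ T} =>
      (⟨T.1.image eps, image_eps_edge hk T.1, image_eps_matching hk T.1 T.2⟩ :
        {s : Finset (Sym2 (Fin k)) //
          (∀ e ∈ s, e ∈ (cycleGraph k).edgeSet) ∧
          (∀ e ∈ s, ∀ f ∈ s, e ≠ f → ∀ v : Fin k, v ∈ e → v ∉ f)}))
    ⟨?_, ?_⟩)).symm
  · intro T₁ T₂ h
    have := congrArg Subtype.val h
    exact Subtype.ext (Finset.image_injective (eps_injective hk) this)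
  · rintro ⟨s, hedge, hmatch⟩
    refine ⟨⟨Finset.univ.filter (fun i => eps i ∈ s), ?_⟩, ?_⟩
    · intro i hi hi1
      simp only [Finset.mem_filter, Finset.mem_univ, true_and] at hi hi1
      have hne : eps i ≠ eps (i + 1) := fun h =>
        add_one_ne hk i (eps_injective hk h).symm
      refine hmatch (eps i) hi (eps (i+1)) hi1 hne (i + 1) ?_ ?_
      · rw [eps, Sym2.mem_iff]; right; rfl
      · rw [eps, Sym2.mem_iff]; left; rfl
    · apply Subtype.ext
      simp only
      ext e
      simp only [Finset.mem_image, Finset.mem_filter, Finset.mem_univ, true_and]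
      constructor
      · rintro ⟨i, hi, rfl⟩; exact hi
      · intro he
        obtain ⟨i, rfl⟩ := edgeSet_sub hk e (hedge e he)
        exact ⟨i, he, rfl⟩

lemma card_sparseT {k : ℕ} [NeZero k] (hk : 3 ≤ k) :
    Nat.card {T : Finset (Fin k) // ∀ i ∈ T, i + 1 ∉ T} =
    ((range k).powerset.filter fun S => ∀ i ∈ S, (i + 1) % k ∉ S).card := by
  rw [← Nat.card_eq_finsetCard]
  refine Nat.card_congr (Equiv.ofBijective
    (fun T : {T : Finset (Fin k) // ∀ i ∈ T, i + 1 ∉ T} =>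
      (⟨T.1.image Fin.val, ?_⟩ :
        {S // S ∈ (range k).powerset.filter fun S => ∀ i ∈ S, (i + 1) % k ∉ S}))
    ⟨?_, ?_⟩)
  · simp only [Finset.mem_filter, Finset.mem_powerset]
    refine ⟨fun x hx => ?_, fun x hx hx1 => ?_⟩
    · obtain ⟨i, _, rfl⟩ := Finset.mem_image.mp hx
      simp only [mem_range]; exact i.isLt
    · obtain ⟨i, hi, rfl⟩ := Finset.mem_image.mp hx
      rw [← val_add_one hk i] at hx1
      obtain ⟨j, hj, hji⟩ := Finset.mem_image.mp hx1
      have : j = i + 1 := Fin.ext hji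
      exact T.2 i hi (this ▸ hj)
  · intro T₁ T₂ h
    have := congrArg Subtype.val h
    exact Subtype.ext (Finset.image_injective Fin.val_injective this)
  · rintro ⟨S, hS⟩
    simp only [Finset.mem_filter, Finset.mem_powerset] at hS
    obtain ⟨hsub, hsp⟩ := hS
    refine ⟨⟨Finset.univ.filter (fun i : Fin k => i.val ∈ S), ?_⟩, ?_⟩
    · intro i hi hi1
      simp only [Finset.mem_filter, Finset.mem_univ, true_and] at hi hi1
      rw [val_add_one hk i] at hi1
      exact hsp i.val hi hi1
    · apply Subtype.ext
      simp only
      ext x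
      simp only [Finset.mem_image, Finset.mem_filter, Finset.mem_univ, true_and]
      constructor
      · rintro ⟨i, hi, rfl⟩; exact hi
      · intro hx
        have hxk : x < k := by have := hsub hx; simpa using this
        exact ⟨⟨x, hxk⟩, hx, rfl⟩


lemma lucas_eq_fib (n : ℕ) : lucas (n + 1) = Nat.fib (n + 2) + Nat.fib n := by
  induction n using Nat.strong_induction_on with
  | _ n ih =>
    match n with
    | 0 => rfl
    | 1 => rfl
    | (m+2) =>
      show lucas (m + 2) + lucas (m + 1) = _
      rw [show lucas (m + 2) = lucas ((m+1) + 1) from rfl, ih (m+1) (by omega), ih m (by omega)]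
      have h1 := Nat.fib_add_two (n := m + 2)
      have h2 := Nat.fib_add_two (n := m)
      have h3 : Nat.fib (m+2+1) = Nat.fib (m+1+2) := rfl
      have h4 : Nat.fib (m+2+2) = Nat.fib (m+4) := rfl
      have h5 : Nat.fib (m+1+2) = Nat.fib (m+3) := rfl
      omega

/-- The number of matchings (sets of pairwise non-adjacent edges, including the empty
set) of the cycle graph `C_k` on `k ≥ 3` vertices equals the Lucas number `L_k`. -/
theorem stmt18 (k : ℕ) (hk : 3 ≤ k) :
    Nat.card {s : Finset (Sym2 (Fin k)) //
      (∀ e ∈ s, e ∈ (cycleGraph k).edgeSet) ∧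
      (∀ e ∈ s, ∀ f ∈ s, e ≠ f → ∀ v : Fin k, v ∈ e → v ∉ f)} = lucas k := by
  haveI : NeZero k := ⟨by omega⟩
  obtain ⟨m, rfl⟩ : ∃ m, k = m + 3 := ⟨k - 3, by omega⟩
  rw [card_matchings hk, card_sparseT hk]
  have hc : ((range (m+3)).powerset.filter fun S => ∀ i ∈ S, (i + 1) % (m+3) ∉ S).card
      = ccount (m+3) := rfl
  rw [hc, ccount_eq _ (by omega)]
  have e1 : m + 3 - 1 = m + 2 := by omega
  have e2 : m + 3 - 3 = m := by omega
  rw [e1, e2, gcount_eq_fib, gcount_eq_fib]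
  rw [show m + 3 = (m + 2) + 1 from rfl, lucas_eq_fib]
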